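/- Let H be a complex Hilbert space, B a bounded sesquilinear form with continuity constant C_B, and V a closed subspace on which B is inf-sup stable with constant γ > 0 (and nondegenerate in the transposed sense on V). Let K, K_m : V → H be linear maps with ‖(K − K_m) v‖ ≤ ε ‖v‖ and ‖(id + K_m) v‖ ≤ C₀ ‖v‖ for all v ∈ V, where here 'B inf-sup stable on the corrected space' means: for all v ∈ V \\ {0}, sup_{ψ ∈ V \\ {0}} |B ((id+K)v) ((id+K)ψ)| / (‖v‖‖ψ‖) ≥ γ, and ‖(id+K)ψ‖ ≤ C₁ ‖ψ‖. Then for ε small enough (ε C_B (C₀ + C₁) < γ/2), the perturbed form satisfies: for all v ∈ V \\ {0}, sup_{ψ ∈ V \\ {0}} |B ((id+K_m)v) ((id+K_m)ψ)| / (‖v‖‖ψ‖) ≥ γ − ε C_B (C₀ + C₁) > 0. -/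

import Mathlib

/-- Abstract perturbation of inf-sup stability: if the corrected form with `K` is
inf-sup stable with constant `γ` and `K_m` is an `ε`-perturbation of `K`, then for
`ε C_B (C₀ + C₁) < γ/2` the form with `K_m` is inf-sup stable with constant
`γ − ε C_B (C₀ + C₁) > 0`. -/
theorem perturbed_infsup
    {H : Type*} [NormedAddCommGroup H] [InnerProductSpace ℂ H] [CompleteSpace H]
    (B : H →ₗ[ℂ] H →ₗ⋆[ℂ] ℂ) (CB : ℝ) (hCB : 0 ≤ CB)
    (hB : ∀ v w : H, ‖B v w‖ ≤ CB * ‖v‖ * ‖w‖)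
    (V : Submodule ℂ H) (hV : IsClosed (V : Set H))
    (γ : ℝ) (hγ : 0 < γ)
    (K Km : V →ₗ[ℂ] H)
    (ε : ℝ) (hε : 0 ≤ ε)
    (hKdiff : ∀ v : V, ‖K v - Km v‖ ≤ ε * ‖(v : H)‖)
    (C₀ : ℝ) (hKm : ∀ v : V, ‖(v : H) + Km v‖ ≤ C₀ * ‖(v : H)‖)
    (C₁ : ℝ) (hK : ∀ ψ : V, ‖(ψ : H) + K ψ‖ ≤ C₁ * ‖(ψ : H)‖)
    (hinfsup : ∀ v : V, (v : H) ≠ 0 →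
      γ ≤ ⨆ ψ : V, ‖B ((v : H) + K v) ((ψ : H) + K ψ)‖ / (‖(v : H)‖ * ‖(ψ : H)‖))
    (hsmall : ε * CB * (C₀ + C₁) < γ / 2) :
    (0 < γ - ε * CB * (C₀ + C₁)) ∧
      ∀ v : V, (v : H) ≠ 0 →
        γ - ε * CB * (C₀ + C₁) ≤
          ⨆ ψ : V, ‖B ((v : H) + Km v) ((ψ : H) + Km ψ)‖ / (‖(v : H)‖ * ‖(ψ : H)‖) := by

  constructor
  · linarith
  intro v hv
  set δ := ε * CB * (C₀ + C₁) with hδdef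
  have hvpos : 0 < ‖(v : H)‖ := norm_pos_iff.mpr hv
  have hC0 : 0 ≤ C₀ := by
    have h1 : (0:ℝ) ≤ C₀ * ‖(v : H)‖ := le_trans (norm_nonneg _) (hKm v)
    nlinarith
  have hC1 : 0 ≤ C₁ := by
    have h1 : (0:ℝ) ≤ C₁ * ‖(v : H)‖ := le_trans (norm_nonneg _) (hK v)
    nlinarith
  have hδ : 0 ≤ δ := by positivity
  -- key pointwise estimate
  have key : ∀ ψ : V,
      ‖B ((v : H) + K v) ((ψ : H) + K ψ) - B ((v : H) + Km v) ((ψ : H) + Km ψ)‖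
        ≤ δ * (‖(v : H)‖ * ‖(ψ : H)‖) := by
    intro ψ
    have e1 : B ((v : H) + K v) ((ψ : H) + K ψ) - B ((v : H) + Km v) ((ψ : H) + Km ψ)
        = B (((v : H) + K v) - ((v : H) + Km v)) ((ψ : H) + K ψ)
          + B ((v : H) + Km v) (((ψ : H) + K ψ) - ((ψ : H) + Km ψ)) := by
      simp only [map_sub, LinearMap.sub_apply]
      ring
    have hd1 : ((v : H) + K v) - ((v : H) + Km v) = K v - Km v := by abel
    have hd2 : ((ψ : H) + K ψ) - ((ψ : H) + Km ψ) = K ψ - Km ψ := by abel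
    rw [e1, hd1, hd2]
    have t1 : ‖B (K v - Km v) ((ψ : H) + K ψ)‖ ≤ CB * (ε * ‖(v : H)‖) * (C₁ * ‖(ψ : H)‖) := by
      calc ‖B (K v - Km v) ((ψ : H) + K ψ)‖
          ≤ CB * ‖K v - Km v‖ * ‖(ψ : H) + K ψ‖ := hB _ _
        _ ≤ CB * (ε * ‖(v : H)‖) * (C₁ * ‖(ψ : H)‖) := by
            apply mul_le_mul
            · exact mul_le_mul_of_nonneg_left (hKdiff v) hCB
            · exact hK ψ
            · exact norm_nonneg _
            · positivity
    have t2 : ‖B ((v : H) + Km v) (K ψ - Km ψ)‖ ≤ CB * (C₀ * ‖(v : H)‖) * (ε * ‖(ψ : H)‖) := by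
      calc ‖B ((v : H) + Km v) (K ψ - Km ψ)‖
          ≤ CB * ‖(v : H) + Km v‖ * ‖K ψ - Km ψ‖ := hB _ _
        _ ≤ CB * (C₀ * ‖(v : H)‖) * (ε * ‖(ψ : H)‖) := by
            apply mul_le_mul
            · exact mul_le_mul_of_nonneg_left (hKm v) hCB
            · exact hKdiff ψ
            · exact norm_nonneg _
            · positivity
    calc ‖B (K v - Km v) ((ψ : H) + K ψ) + B ((v : H) + Km v) (K ψ - Km ψ)‖
        ≤ ‖B (K v - Km v) ((ψ : H) + K ψ)‖ + ‖B ((v : H) + Km v) (K ψ - Km ψ)‖ :=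
          norm_add_le _ _
      _ ≤ CB * (ε * ‖(v : H)‖) * (C₁ * ‖(ψ : H)‖) + CB * (C₀ * ‖(v : H)‖) * (ε * ‖(ψ : H)‖) :=
          add_le_add t1 t2
      _ = δ * (‖(v : H)‖ * ‖(ψ : H)‖) := by rw [hδdef]; ring
  -- boundedness of the perturbed quotient
  have hbdd : BddAbove (Set.range fun ψ : V =>
      ‖B ((v : H) + Km v) ((ψ : H) + Km ψ)‖ / (‖(v : H)‖ * ‖(ψ : H)‖)) := by
    refine ⟨CB * C₀ * (C₀ * ‖(v : H)‖) / ‖(v : H)‖, ?_⟩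
    rintro x ⟨ψ, rfl⟩
    by_cases hψ : (ψ : H) = 0
    · simp [hψ]
      positivity
    · have hψpos : 0 < ‖(ψ : H)‖ := norm_pos_iff.mpr hψ
      rw [div_le_div_iff₀ (by positivity) hvpos]
      calc ‖B ((v : H) + Km v) ((ψ : H) + Km ψ)‖ * ‖(v : H)‖
          ≤ (CB * ‖(v : H) + Km v‖ * ‖(ψ : H) + Km ψ‖) * ‖(v : H)‖ := by
            exact mul_le_mul_of_nonneg_right (hB _ _) (norm_nonneg _)
        _ ≤ (CB * (C₀ * ‖(v : H)‖) * (C₀ * ‖(ψ : H)‖)) * ‖(v : H)‖ := by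
            apply mul_le_mul_of_nonneg_right _ (norm_nonneg _)
            apply mul_le_mul
            · exact mul_le_mul_of_nonneg_left (hKm v) hCB
            · exact hKm ψ
            · exact norm_nonneg _
            · positivity
        _ = CB * C₀ * (C₀ * ‖(v : H)‖) * (‖(v : H)‖ * ‖(ψ : H)‖) := by ring
  -- pointwise comparison of quotients
  have hpt : ∀ ψ : V,
      ‖B ((v : H) + K v) ((ψ : H) + K ψ)‖ / (‖(v : H)‖ * ‖(ψ : H)‖)
        ≤ ‖B ((v : H) + Km v) ((ψ : H) + Km ψ)‖ / (‖(v : H)‖ * ‖(ψ : H)‖) + δ := by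
    intro ψ
    by_cases hψ : (ψ : H) = 0
    · simp [hψ]
      positivity
    · have hψpos : 0 < ‖(ψ : H)‖ := norm_pos_iff.mpr hψ
      have hc : 0 < ‖(v : H)‖ * ‖(ψ : H)‖ := by positivity
      rw [div_le_iff₀ hc, add_mul, div_mul_cancel₀ _ (ne_of_gt hc)]
      have h1 : ‖B ((v : H) + K v) ((ψ : H) + K ψ)‖
          ≤ ‖B ((v : H) + Km v) ((ψ : H) + Km ψ)‖
            + ‖B ((v : H) + K v) ((ψ : H) + K ψ) - B ((v : H) + Km v) ((ψ : H) + Km ψ)‖ := by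
        exact norm_le_norm_add_norm_sub' _ _
      have h2 := key ψ
      calc ‖B ((v : H) + K v) ((ψ : H) + K ψ)‖
          ≤ ‖B ((v : H) + Km v) ((ψ : H) + Km ψ)‖ + δ * (‖(v : H)‖ * ‖(ψ : H)‖) := by
            linarith
        _ = ‖B ((v : H) + Km v) ((ψ : H) + Km ψ)‖ + δ * (‖(v : H)‖ * ‖(ψ : H)‖) := rfl
  -- conclude
  have hle : γ ≤ (⨆ ψ : V, ‖B ((v : H) + Km v) ((ψ : H) + Km ψ)‖ / (‖(v : H)‖ * ‖(ψ : H)‖)) + δ := by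
    refine le_trans (hinfsup v hv) (ciSup_le fun ψ => ?_)
    exact le_trans (hpt ψ) (add_le_add (le_ciSup hbdd ψ) (le_refl δ))
  linarith
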